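/- Let T be a rooted tree obtained by depth-first search from a cactus graph G, where each simple cycle of G corresponds to a vertical path from a start node x to an end node y in T. If a node v lies on the paths of two distinct cycles C(x,y) and C(x',y') of T, then v = x or v = x'. -/

import Mathlib

open SimpleGraph Walk

/-- If the endpoint of a path appears in `takeUntil w`, it equals `w`. -/
lemma end_eq_of_mem_takeUntil {V : Type*} [DecidableEq V] {G : SimpleGraph V} {r x : V}
    {q : G.Walk r x} (hq : q.IsPath) {w : V} (hw : w ∈ q.support)
    (hx : x ∈ (q.takeUntil w hw).support) : x = w := by
  have hnodup : q.support.Nodup := hq.support_nodup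
  conv at hnodup => rw [← q.take_spec hw, Walk.support_append]
  rw [List.nodup_append] at hnodup
  have hx' : x ∈ (q.dropUntil w hw).support := Walk.end_mem_support _
  rw [Walk.support_eq_cons (q.dropUntil w hw)] at hx'
  rcases List.mem_cons.mp hx' with h | h
  · exact h
  · exact absurd rfl (hnodup.2.2 x hx x h)

/-- Appending two paths whose supports meet only at the common endpoint is a path. -/
lemma isPath_append_of_meet_end {V : Type*} [DecidableEq V] {G : SimpleGraph V} {r x v : V}
    {q : G.Walk r x} {p : G.Walk x v} (hq : q.IsPath) (hp : p.IsPath)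
    (h : ∀ w ∈ p.support, w ∈ q.support → w = x) : (q.append p).IsPath := by
  rw [Walk.isPath_def, Walk.support_append, List.nodup_append]
  refine ⟨hq.support_nodup, hp.support_nodup.tail, ?_⟩
  intro w hwq w' hwp hww
  rw [← hww] at hwp
  have hx : x ∉ p.support.tail := by
    have := hp.support_nodup
    rw [Walk.support_eq_cons] at this
    exact (List.nodup_cons.mp this).1
  have : w = x := h w (List.mem_of_mem_tail hwp) hwq
  exact hx (this ▸ hwp)

/-- `T` is the DFS tree of a cactus graph `G` rooted at `r`.  A cycle `C(x,y)` of the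
cactus is represented by the tree path from the start node `x` (an ancestor) to the
end node `y`.  Being an ancestor is expressed by lying on the (unique) tree path from
the root.  The cactus property gives that the two cycle paths share at most one
vertex.  If `v` lies on both cycle paths, then `v = x` or `v = x'`. -/
theorem stmt_1 {V : Type*} [Fintype V] [DecidableEq V] (T : SimpleGraph V)
    (hT : T.IsTree) (r : V) (x y x' y' v : V)
    (p : T.Path x y) (p' : T.Path x' y')
    -- `x` is the start node of `C(x,y)`: it is an ancestor of every vertex of the path
    (hanc : ∀ z ∈ p.1.support, ∀ q : T.Path r z, x ∈ q.1.support)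
    (hanc' : ∀ z ∈ p'.1.support, ∀ q : T.Path r z, x' ∈ q.1.support)
    -- the two cycles are distinct
    (hne : (x, y) ≠ (x', y'))
    -- cactus property: the two cycles share at most one vertex
    (hcactus : (p.1.support.toFinset ∩ p'.1.support.toFinset).card ≤ 1)
    (hv : v ∈ p.1.support) (hv' : v ∈ p'.1.support) :
    v = x ∨ v = x' := by
  -- the cactus property as an equality test
  have key : ∀ a : V, a ∈ p.1.support → a ∈ p'.1.support → v = a := by
    intro a ha ha'
    have h1 : v ∈ p.1.support.toFinset ∩ p'.1.support.toFinset := by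
      simp [Finset.mem_inter, List.mem_toFinset, hv, hv']
    have h2 : a ∈ p.1.support.toFinset ∩ p'.1.support.toFinset := by
      simp [Finset.mem_inter, List.mem_toFinset, ha, ha']
    exact Finset.card_le_one.mp hcactus v h1 a h2
  -- canonical tree paths from the root
  have qx : T.Path r x := ((hT.isConnected.preconnected r x).some).toPath
  have qx' : T.Path r x' := ((hT.isConnected.preconnected r x').some).toPath
  -- the path from `r` to `v` through `x` along `p`
  have hcond : ∀ w ∈ (p.1.takeUntil v hv).support, w ∈ qx.1.support → w = x := by
    intro w hwp hwq
    have hwp' : w ∈ p.1.support := Walk.support_takeUntil_subset _ hv hwp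
    have := hanc w hwp' ⟨qx.1.takeUntil w hwq, qx.2.takeUntil hwq⟩
    exact (end_eq_of_mem_takeUntil qx.2 hwq this).symm
  have hpathv : (qx.1.append (p.1.takeUntil v hv)).IsPath :=
    isPath_append_of_meet_end qx.2 (p.2.takeUntil hv) hcond
  have hx'mem := hanc' v hv' ⟨_, hpathv⟩
  rw [Walk.mem_support_append_iff] at hx'mem
  -- the path from `r` to `v` through `x'` along `p'`
  have hcond' : ∀ w ∈ (p'.1.takeUntil v hv').support, w ∈ qx'.1.support → w = x' := by
    intro w hwp hwq
    have hwp' : w ∈ p'.1.support := Walk.support_takeUntil_subset _ hv' hwp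
    have := hanc' w hwp' ⟨qx'.1.takeUntil w hwq, qx'.2.takeUntil hwq⟩
    exact (end_eq_of_mem_takeUntil qx'.2 hwq this).symm
  have hpathv' : (qx'.1.append (p'.1.takeUntil v hv')).IsPath :=
    isPath_append_of_meet_end qx'.2 (p'.2.takeUntil hv') hcond'
  have hxmem := hanc v hv ⟨_, hpathv'⟩
  rw [Walk.mem_support_append_iff] at hxmem
  rcases hx'mem with hx'q | hx'p
  · rcases hxmem with hxq' | hxp'
    · -- `x` is on the tree path to `x'` and vice versa: then `x = x'`.
      have huniq : qx' = ⟨qx.1.takeUntil x' hx'q, qx.2.takeUntil hx'q⟩ :=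
        hT.IsAcyclic.path_unique _ _
      have : x ∈ (qx.1.takeUntil x' hx'q).support := by rw [huniq] at hxq'; exact hxq'
      have hxx' : x = x' := end_eq_of_mem_takeUntil qx.2 hx'q this
      exact Or.inl (key x (Walk.start_mem_support _) (hxx' ▸ Walk.start_mem_support p'.1))
    · -- `x` lies on `p'` as well
      have := Walk.support_takeUntil_subset _ hv' hxp'
      exact Or.inl (key x (Walk.start_mem_support _) this)
  · -- `x'` lies on `p` as well
    have := Walk.support_takeUntil_subset _ hv hx'p
    exact Or.inr (key x' this (Walk.start_mem_support _))
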